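/- arXiv:1807.03389 — 6 statements merged into one kernel-verified Lean document; each statement's English description precedes it below -/
import Mathlib

section
/- Let m > 0, q > 0, and let a, b ∈ ℂ with |a| < 1. Then the integral ∫_ℂ e^{q|az+b|^m - q|z|^m} dA(z) is finite. -/
open MeasureTheory

private lemma aux_bound (ε m : ℝ) (hε : 0 < ε) (hm : 0 < m) :
    ∃ C : ℝ, 0 < C ∧ ∀ t : ℝ, 0 ≤ t →
      Real.exp (-(ε * t ^ m)) ≤ C * (1 + t) ^ (-(3:ℝ)) := by
  have h1 : Filter.Tendsto (fun s : ℝ => s ^ (3/m) * Real.exp (-ε * s)) Filter.atTop (nhds 0) :=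
    tendsto_rpow_mul_exp_neg_mul_atTop_nhds_zero _ ε hε
  have h2 : Filter.Tendsto (fun t : ℝ => t ^ m) Filter.atTop Filter.atTop :=
    tendsto_rpow_atTop hm
  have h3 := h1.comp h2
  have h4 : ∀ᶠ t in Filter.atTop, ((t:ℝ) ^ m) ^ (3/m) * Real.exp (-ε * t ^ m) ≤ 1/8 := by
    have := h3.eventually (eventually_le_nhds (show (0:ℝ) < 1/8 by norm_num))
    simpa [Function.comp] using this
  obtain ⟨T, hT⟩ := (h4.and (Filter.eventually_ge_atTop (1:ℝ))).exists_forall_of_atTop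
  -- continuous bound on [0, max T 1]
  set T' : ℝ := max T 1 with hT'
  have hcont : ContinuousOn (fun t : ℝ => Real.exp (-(ε * t ^ m)) * (1 + t) ^ (3:ℝ))
      (Set.Icc 0 T') := by
    apply ContinuousOn.mul
    · apply Continuous.comp_continuousOn Real.continuous_exp
      apply ContinuousOn.neg
      apply ContinuousOn.mul continuousOn_const
      intro t ht
      exact (Real.continuousAt_rpow_const t m (Or.inr hm.le)).continuousWithinAt
    · intro t ht
      apply ContinuousWithinAt.rpow_const
      · exact (continuous_const.add continuous_id).continuousWithinAt
      · right; norm_num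
  obtain ⟨C₀, hC₀⟩ := (isCompact_Icc (a := (0:ℝ)) (b := T')).exists_bound_of_continuousOn hcont
  refine ⟨max C₀ 1, lt_of_lt_of_le one_pos (le_max_right _ _), fun t ht => ?_⟩
  have hpos : (0:ℝ) < 1 + t := by linarith
  have hkey : Real.exp (-(ε * t ^ m)) * (1 + t) ^ (3:ℝ) ≤ max C₀ 1 := by
    rcases le_total t T' with h | h
    · have := hC₀ t ⟨ht, h⟩
      calc Real.exp (-(ε * t ^ m)) * (1 + t) ^ (3:ℝ)
          ≤ ‖Real.exp (-(ε * t ^ m)) * (1 + t) ^ (3:ℝ)‖ := le_abs_self _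
        _ ≤ C₀ := this
        _ ≤ max C₀ 1 := le_max_left _ _
    · have ht1 : (1:ℝ) ≤ t := le_trans (le_max_right T 1) h
      have htT : T ≤ t := le_trans (le_max_left T 1) h
      obtain ⟨hsmall, _⟩ := hT t htT
      have ht0 : (0:ℝ) < t := lt_of_lt_of_le one_pos ht1
      have hrw : ((t:ℝ) ^ m) ^ (3/m) = t ^ (3:ℝ) := by
        rw [← Real.rpow_mul ht0.le]
        congr 1
        field_simp
      have h5 : (1 + t) ^ (3:ℝ) ≤ 8 * t ^ (3:ℝ) := by
        have h1t : 1 + t ≤ 2 * t := by linarith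
        calc (1 + t) ^ (3:ℝ) ≤ (2 * t) ^ (3:ℝ) :=
              Real.rpow_le_rpow (by linarith) h1t (by norm_num)
          _ = 2 ^ (3:ℝ) * t ^ (3:ℝ) := Real.mul_rpow (by norm_num) ht0.le
          _ = 8 * t ^ (3:ℝ) := by norm_num
      calc Real.exp (-(ε * t ^ m)) * (1 + t) ^ (3:ℝ)
          ≤ Real.exp (-(ε * t ^ m)) * (8 * t ^ (3:ℝ)) := by
            apply mul_le_mul_of_nonneg_left h5 (Real.exp_pos _).le
        _ = 8 * (((t:ℝ) ^ m) ^ (3/m) * Real.exp (-ε * t ^ m)) := by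
            rw [hrw]; ring_nf
        _ ≤ 8 * (1/8) := by linarith
        _ ≤ max C₀ 1 := by simpa using le_max_right C₀ 1
  have heq : (1 + t) ^ (-(3:ℝ)) = ((1 + t) ^ (3:ℝ))⁻¹ := Real.rpow_neg hpos.le _
  have h3pos : (0:ℝ) < (1 + t) ^ (3:ℝ) := Real.rpow_pos_of_pos hpos _
  rw [heq, ← div_eq_mul_inv, le_div_iff₀ h3pos]
  exact hkey

private lemma aux_integrable (ε m : ℝ) (hε : 0 < ε) (hm : 0 < m) :
    Integrable (fun z : ℂ => Real.exp (-(ε * ‖z‖ ^ m))) volume := by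
  obtain ⟨C, hC0, hC⟩ := aux_bound ε m hε hm
  have hint : Integrable (fun z : ℂ => C * (1 + ‖z‖) ^ (-(3:ℝ))) volume := by
    apply Integrable.const_mul
    apply integrable_one_add_norm (E := ℂ)
    rw [Complex.finrank_real_complex]; norm_num
  apply hint.mono'
  · apply Continuous.aestronglyMeasurable
    apply Real.continuous_exp.comp
    apply Continuous.neg
    apply Continuous.mul continuous_const
    exact continuous_norm.rpow_const (fun z => Or.inr hm.le)
  · filter_upwards with z
    rw [Real.norm_eq_abs, abs_of_pos (Real.exp_pos _)]
    exact hC ‖z‖ (norm_nonneg z)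

theorem integrable_exp_weight_difference (m q : ℝ) (hm : 0 < m) (hq : 0 < q)
    (a b : ℂ) (ha : ‖a‖ < 1) :
    Integrable
      (fun z : ℂ => Real.exp (q * ‖a * z + b‖ ^ m - q * ‖z‖ ^ m))
      volume := by
  set r : ℝ := (1 + ‖a‖) / 2 with hrdef
  have ha0 : 0 ≤ ‖a‖ := norm_nonneg _
  have hr0 : 0 < r := by rw [hrdef]; linarith
  have hr1 : r < 1 := by rw [hrdef]; linarith
  have hra : ‖a‖ < r := by rw [hrdef]; linarith
  have hrm : r ^ m < 1 := Real.rpow_lt_one hr0.le hr1 hm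
  set ε : ℝ := q * (1 - r ^ m) with hεdef
  have hε : 0 < ε := mul_pos hq (by linarith)
  set R : ℝ := ‖b‖ / (r - ‖a‖) with hRdef
  have hR0 : 0 ≤ R := div_nonneg (norm_nonneg _) (by linarith)
  set K : ℝ := q * (‖a‖ * R + ‖b‖) ^ m + ε * R ^ m with hKdef
  have hK0 : 0 ≤ K := by
    apply add_nonneg
    · exact mul_nonneg hq.le (Real.rpow_nonneg (by positivity) _)
    · exact mul_nonneg hε.le (Real.rpow_nonneg hR0 _)
  have key : ∀ z : ℂ, q * ‖a * z + b‖ ^ m - q * ‖z‖ ^ m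
      ≤ K - ε * ‖z‖ ^ m := by
    intro z
    set t : ℝ := ‖z‖ with htdef
    have ht0 : 0 ≤ t := norm_nonneg _
    have htri : ‖a * z + b‖ ≤ ‖a‖ * t + ‖b‖ := by
      calc ‖a * z + b‖ ≤ ‖a * z‖ + ‖b‖ :=
            norm_add_le _ _
        _ = ‖a‖ * t + ‖b‖ := by rw [norm_mul]
    rcases le_total R t with h | h
    · -- large t
      have hb : ‖b‖ ≤ (r - ‖a‖) * t := by
        have : ‖b‖ = (r - ‖a‖) * R := by
          rw [hRdef, mul_div_cancel₀]; linarith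
        rw [this]
        exact mul_le_mul_of_nonneg_left h (by linarith)
      have h1 : ‖a * z + b‖ ≤ r * t := by nlinarith
      have h2 : ‖a * z + b‖ ^ m ≤ r ^ m * t ^ m := by
        calc ‖a * z + b‖ ^ m ≤ (r * t) ^ m :=
              Real.rpow_le_rpow (norm_nonneg _) h1 hm.le
          _ = r ^ m * t ^ m := Real.mul_rpow hr0.le ht0
      have htm : 0 ≤ t ^ m := Real.rpow_nonneg ht0 _
      nlinarith [mul_le_mul_of_nonneg_left h2 hq.le]
    · -- small t
      have h1 : ‖a * z + b‖ ^ m ≤ (‖a‖ * R + ‖b‖) ^ m := by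
        apply Real.rpow_le_rpow (norm_nonneg _) _ hm.le
        calc ‖a * z + b‖ ≤ ‖a‖ * t + ‖b‖ := htri
          _ ≤ ‖a‖ * R + ‖b‖ := by nlinarith
      have h2 : t ^ m ≤ R ^ m := Real.rpow_le_rpow ht0 h hm.le
      have htm : 0 ≤ t ^ m := Real.rpow_nonneg ht0 _
      nlinarith [mul_le_mul_of_nonneg_left h1 hq.le]
  have hint : Integrable (fun z : ℂ => Real.exp K * Real.exp (-(ε * ‖z‖ ^ m))) volume :=
    (aux_integrable ε m hε hm).const_mul _
  apply hint.mono'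
  · apply Continuous.aestronglyMeasurable
    apply Real.continuous_exp.comp
    apply Continuous.sub
    · apply Continuous.mul continuous_const
      exact (continuous_norm.comp (by continuity)).rpow_const (fun z => Or.inr hm.le)
    · exact Continuous.mul continuous_const
        (continuous_norm.rpow_const (fun z => Or.inr hm.le))
  · filter_upwards with z
    rw [Real.norm_eq_abs, abs_of_pos (Real.exp_pos _), ← Real.exp_add]
    apply Real.exp_le_exp.mpr
    have := key z
    linarith
end

section
/- Let m > 0 and let Φ(z) = az + b with a, b ∈ ℂ, |a| < 1. Suppose (f_n) is a sequence of entire functions such that sup_n sup_{z ∈ ℂ} |f_n(z)| e^{-|z|^m} < ∞ and f_n → 0 uniformly on every compact subset of ℂ. Then sup_{z ∈ ℂ} |f_n(Φ(z))| e^{-|z|^m} → 0 as n → ∞. -/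
theorem compact_composition_affine_growth (m : ℝ) (hm : 0 < m) (a b : ℂ)
    (ha : ‖a‖ < 1) (f : ℕ → ℂ → ℂ) (hf : ∀ n, Differentiable ℂ (f n))
    (hbd : ∃ M : ℝ, ∀ n (z : ℂ), ‖f n z‖ * Real.exp (-(‖z‖ ^ m)) ≤ M)
    (hconv : TendstoLocallyUniformly f 0 Filter.atTop) :
    ∀ ε > (0 : ℝ), ∃ N, ∀ n ≥ N, ∀ z : ℂ,
      ‖f n (a * z + b)‖ * Real.exp (-(‖z‖ ^ m)) ≤ ε := by
  obtain ⟨M, hM⟩ := hbd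
  have hM0 : 0 ≤ M := le_trans (by positivity) (hM 0 0)
  set A := ‖a‖ with hA
  have hA0 : 0 ≤ A := norm_nonneg a
  set c : ℝ := (A + 1) / 2 with hc
  have hac : A < c := by rw [hc]; linarith
  have hc0 : 0 < c := by rw [hc]; linarith
  have hc1 : c < 1 := by rw [hc]; linarith
  have hcm : c ^ m < 1 := Real.rpow_lt_one (le_of_lt hc0) hc1 hm
  have hcm0 : 0 < 1 - c ^ m := by linarith
  intro ε hε
  set L : ℝ := Real.log ((M + 1) / ε) / (1 - c ^ m) with hL
  set R : ℝ := max (max (‖b‖ / (c - A)) 1) ((max L 0) ^ (1 / m)) with hR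
  have hR1 : (1 : ℝ) ≤ R := le_trans (le_max_right _ _) (le_max_left _ _)
  have hR0 : (0 : ℝ) ≤ R := by linarith
  -- tail bound
  have tail : ∀ z : ℂ, R ≤ ‖z‖ →
      M * Real.exp ((A * ‖z‖ + ‖b‖) ^ m - ‖z‖ ^ m) ≤ ε := by
    intro z hz
    set t := ‖z‖ with ht
    have ht0 : 0 ≤ t := norm_nonneg z
    have h1 : ‖b‖ ≤ (c - A) * t := by
      have h2 : ‖b‖ / (c - A) ≤ t :=
        le_trans (le_trans (le_max_left _ _) (le_max_left _ _)) hz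
      have := (div_le_iff₀ (by linarith : (0:ℝ) < c - A)).mp h2
      linarith
    have h3 : A * t + ‖b‖ ≤ c * t := by nlinarith
    have h4 : (A * t + ‖b‖) ^ m ≤ (c * t) ^ m :=
      Real.rpow_le_rpow (by positivity) h3 (le_of_lt hm)
    have h5 : (c * t) ^ m = c ^ m * t ^ m := Real.mul_rpow (le_of_lt hc0) ht0
    have h6 : (A * t + ‖b‖) ^ m - t ^ m ≤ -((1 - c ^ m) * t ^ m) := by
      rw [h5] at h4; nlinarith
    have hRm : R ^ m ≤ t ^ m := Real.rpow_le_rpow hR0 hz (le_of_lt hm)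
    have hRmax : max L 0 ≤ R ^ m := by
      have : (max L 0) ^ (1 / m) ≤ R := le_max_right _ _
      calc max L 0 = ((max L 0) ^ (1 / m)) ^ m := by
            rw [← Real.rpow_mul (le_max_right _ _), one_div_mul_cancel (ne_of_gt hm),
              Real.rpow_one]
        _ ≤ R ^ m := Real.rpow_le_rpow (Real.rpow_nonneg (le_max_right _ _) _) this (le_of_lt hm)
    rcases le_or_gt ((M + 1) / ε) 1 with hcase | hcase
    · -- M + 1 ≤ ε
      have hMe : M + 1 ≤ ε := (div_le_one hε).mp hcase
      have : Real.exp ((A * t + ‖b‖) ^ m - t ^ m) ≤ 1 := by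
        apply Real.exp_le_one_iff.mpr
        have : 0 ≤ (1 - c ^ m) * t ^ m := by positivity
        linarith
      nlinarith [Real.exp_pos ((A * t + ‖b‖) ^ m - t ^ m)]
    · have hlog : 0 < Real.log ((M + 1) / ε) := Real.log_pos hcase
      have hL0 : max L 0 = L := max_eq_left (le_of_lt (by positivity))
      have hLt : L ≤ t ^ m := by rw [← hL0]; exact le_trans hRmax hRm
      have h7 : (A * t + ‖b‖) ^ m - t ^ m ≤ -Real.log ((M + 1) / ε) := by
        have : Real.log ((M + 1) / ε) ≤ (1 - c ^ m) * t ^ m := by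
          have := (div_le_iff₀ hcm0).mp hLt
          linarith [mul_comm (t ^ m) (1 - c ^ m)]
        linarith
      have h8 : Real.exp ((A * t + ‖b‖) ^ m - t ^ m) ≤ ε / (M + 1) := by
        calc Real.exp ((A * t + ‖b‖) ^ m - t ^ m)
            ≤ Real.exp (-Real.log ((M + 1) / ε)) := Real.exp_le_exp.mpr h7
          _ = ε / (M + 1) := by
              rw [Real.exp_neg, Real.exp_log (by positivity), inv_div]
      calc M * Real.exp ((A * t + ‖b‖) ^ m - t ^ m)
          ≤ M * (ε / (M + 1)) := by
            exact mul_le_mul_of_nonneg_left h8 hM0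
        _ ≤ ε := by
            rw [mul_div_assoc']
            rw [div_le_iff₀ (by linarith : (0:ℝ) < M + 1)]
            nlinarith
  -- compact part
  have hK : IsCompact (Metric.closedBall (0 : ℂ) (A * R + ‖b‖)) := isCompact_closedBall _ _
  have huK := (tendstoLocallyUniformly_iff_forall_isCompact.mp hconv) _ hK
  rw [Metric.tendstoUniformlyOn_iff] at huK
  obtain ⟨N, hN⟩ := (huK ε hε).exists_forall_of_atTop
  refine ⟨N, fun n hn z => ?_⟩
  rcases le_or_gt (‖z‖) R with hzR | hzR
  · -- |z| ≤ R : use uniform convergence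
    have hmem : a * z + b ∈ Metric.closedBall (0 : ℂ) (A * R + ‖b‖) := by
      rw [Metric.mem_closedBall, dist_zero_right]
      calc ‖a * z + b‖ ≤ ‖a * z‖ + ‖b‖ := norm_add_le _ _
        _ = A * ‖z‖ + ‖b‖ := by
            simp [hA, norm_mul]
        _ ≤ A * R + ‖b‖ := by nlinarith
    have hlt := hN n hn (a * z + b) hmem
    rw [Pi.zero_apply, dist_comm, dist_zero_right] at hlt
    have hexp : Real.exp (-(‖z‖ ^ m)) ≤ 1 := by
      apply Real.exp_le_one_iff.mpr
      have : 0 ≤ ‖z‖ ^ m := Real.rpow_nonneg (norm_nonneg z) m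
      linarith
    calc ‖f n (a * z + b)‖ * Real.exp (-(‖z‖ ^ m))
        ≤ ε * 1 := by
          apply mul_le_mul (le_of_lt hlt) hexp (Real.exp_nonneg _) (le_of_lt hε)
      _ = ε := mul_one ε
  · -- |z| ≥ R : use tail bound
    set w := ‖a * z + b‖ with hw
    have hw0 : 0 ≤ w := norm_nonneg _
    have hfb : ‖f n (a * z + b)‖ ≤ M * Real.exp (w ^ m) := by
      have h := hM n (a * z + b)
      calc ‖f n (a * z + b)‖
          = ‖f n (a * z + b)‖ * Real.exp (-(w ^ m)) * Real.exp (w ^ m) := by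
            rw [mul_assoc, ← Real.exp_add, neg_add_cancel, Real.exp_zero, mul_one]
        _ ≤ M * Real.exp (w ^ m) := mul_le_mul_of_nonneg_right h (Real.exp_nonneg _)
    have hwle : w ≤ A * ‖z‖ + ‖b‖ := by
      rw [hw]
      calc ‖a * z + b‖ ≤ ‖a * z‖ + ‖b‖ :=
            norm_add_le _ _
        _ = A * ‖z‖ + ‖b‖ := by rw [norm_mul]
    have hwm : w ^ m ≤ (A * ‖z‖ + ‖b‖) ^ m :=
      Real.rpow_le_rpow hw0 hwle (le_of_lt hm)
    calc ‖f n (a * z + b)‖ * Real.exp (-(‖z‖ ^ m))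
        ≤ M * Real.exp (w ^ m) * Real.exp (-(‖z‖ ^ m)) :=
          mul_le_mul_of_nonneg_right hfb (Real.exp_nonneg _)
      _ = M * Real.exp (w ^ m - ‖z‖ ^ m) := by
          rw [mul_assoc, ← Real.exp_add]; ring_nf
      _ ≤ M * Real.exp ((A * ‖z‖ + ‖b‖) ^ m - ‖z‖ ^ m) := by
          apply mul_le_mul_of_nonneg_left _ hM0
          exact Real.exp_le_exp.mpr (by linarith)
      _ ≤ ε := tail z (le_of_lt hzR)
end

section
/- Let m > 0 and let Φ be an entire function such that the composition operator C_Φ f = f ∘ Φ maps F_{(m,∞)} boundedly into itself and is compact (that is, for every bounded sequence (f_n) in F_{(m,∞)} converging to 0 uniformly on compact sets, ‖f_n ∘ Φ‖_{(m,∞)} → 0). Then Φ(z) = az + b for some a, b ∈ ℂ with |a| < 1. -/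
lemma expmax {s t : ℝ} (hs : 0 < s) (ht : 0 < t) :
    s * Real.log t - t ≤ s * Real.log s - s := by
  have h := Real.log_le_sub_one_of_pos (x := t/s) (by positivity)
  rw [Real.log_div (ne_of_gt ht) (ne_of_gt hs)] at h
  have h2 : s * (Real.log t - Real.log s) ≤ s * (t/s - 1) :=
    mul_le_mul_of_nonneg_left h (le_of_lt hs)
  have hst : s * (t / s) = t := by field_simp
  nlinarith

lemma aux_norm (m : ℝ) (hm : 0 < m) (n : ℕ) (r : ℝ) (hr : 0 ≤ r) :
    Real.exp ((n:ℝ)/m - (n:ℝ)/m * Real.log ((n:ℝ)/m)) * r ^ n * Real.exp (-(r ^ m)) ≤ 1 := by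
  rcases Nat.eq_zero_or_pos n with hn | hn
  · subst hn
    simp only [Nat.cast_zero, zero_div, Real.log_zero, mul_zero, zero_sub, zero_mul, neg_zero,
      Real.exp_zero, pow_zero, one_mul, mul_one, sub_zero]
    exact Real.exp_le_one_iff.2 (neg_nonpos.2 (Real.rpow_nonneg hr m))
  rcases eq_or_lt_of_le hr with hr0 | hr0
  · rw [← hr0, zero_pow hn.ne']
    simp [Real.exp_nonneg]
  set s : ℝ := (n:ℝ)/m with hs_def
  have hs : 0 < s := by positivity
  have ht : 0 < r ^ m := Real.rpow_pos_of_pos hr0 m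
  have hlog : Real.log (r ^ m) = m * Real.log r := Real.log_rpow hr0 m
  have hrn : r ^ n = Real.exp ((n:ℝ) * Real.log r) := by
    rw [← Real.rpow_natCast r n, Real.rpow_def_of_pos hr0, mul_comm]
  rw [hrn, ← Real.exp_add, ← Real.exp_add, Real.exp_le_one_iff]
  have key := expmax hs ht
  rw [hlog] at key
  have hsm : s * m = (n:ℝ) := by rw [hs_def]; field_simp
  have h3 : (n:ℝ) * Real.log r = s * (m * Real.log r) := by rw [← hsm]; ring
  linarith [key]

theorem affine_of_compact_composition_growth (m : ℝ) (hm : 0 < m)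
    (Φ : ℂ → ℂ) (hΦ : Differentiable ℂ Φ)
    (hbdd : ∀ f : ℂ → ℂ, Differentiable ℂ f →
      (∃ M : ℝ, ∀ z : ℂ, ‖f z‖ * Real.exp (-(‖z‖ ^ m)) ≤ M) →
      ∃ M : ℝ, ∀ z : ℂ, ‖f (Φ z)‖ * Real.exp (-(‖z‖ ^ m)) ≤ M)
    (hcpt : ∀ f : ℕ → ℂ → ℂ, (∀ n, Differentiable ℂ (f n)) →
      (∃ M : ℝ, ∀ n (z : ℂ), ‖f n z‖ * Real.exp (-(‖z‖ ^ m)) ≤ M) →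
      TendstoLocallyUniformly f 0 Filter.atTop →
      ∀ ε > (0 : ℝ), ∃ N, ∀ n ≥ N, ∀ z : ℂ,
        ‖f n (Φ z)‖ * Real.exp (-(‖z‖ ^ m)) ≤ ε) :
    ∃ a b : ℂ, ‖a‖ < 1 ∧ ∀ z : ℂ, Φ z = a * z + b := by
  classical
  set s : ℕ → ℝ := fun n => (n:ℝ)/m with hs_def
  set c : ℕ → ℝ := fun n => Real.exp (s n - s n * Real.log (s n)) with hc_def
  have hcpos : ∀ n, 0 < c n := fun n => Real.exp_pos _
  have hs_top : Filter.Tendsto s Filter.atTop Filter.atTop :=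
    (tendsto_natCast_atTop_atTop).atTop_div_const hm
  have hlog_top : Filter.Tendsto (fun n => Real.log (s n)) Filter.atTop Filter.atTop :=
    Real.tendsto_log_atTop.comp hs_top
  have hdecay : ∀ R : ℝ, 1 ≤ R →
      Filter.Tendsto (fun n => c n * R ^ n) Filter.atTop (nhds 0) := by
    intro R hR
    have hRpos : (0:ℝ) < R := lt_of_lt_of_le one_pos hR
    have heq : ∀ n : ℕ, c n * R ^ n
        = Real.exp (s n - s n * Real.log (s n) + (n:ℝ) * Real.log R) := by
      intro n
      rw [hc_def]
      have : R ^ n = Real.exp ((n:ℝ) * Real.log R) := by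
        rw [← Real.rpow_natCast R n, Real.rpow_def_of_pos hRpos, mul_comm]
      rw [this, ← Real.exp_add]
    have hbot : Filter.Tendsto
        (fun n => s n - s n * Real.log (s n) + (n:ℝ) * Real.log R)
        Filter.atTop Filter.atBot := by
      have hneg : Filter.Tendsto (fun n => -(s n)) Filter.atTop Filter.atBot :=
        Filter.tendsto_neg_atBot_iff.mpr hs_top
      refine Filter.tendsto_atBot_mono' Filter.atTop ?_ hneg
      filter_upwards [hlog_top.eventually_ge_atTop (2 + m * Real.log R),
        hs_top.eventually_ge_atTop 1] with n h1 h2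
      have hsn : (n:ℝ) = s n * m := by rw [hs_def]; field_simp
      have hs0 : (0:ℝ) ≤ s n := le_trans zero_le_one h2
      have : s n * (1 - Real.log (s n) + m * Real.log R) ≤ s n * (-1) := by
        apply mul_le_mul_of_nonneg_left _ hs0
        linarith
      calc s n - s n * Real.log (s n) + (n:ℝ) * Real.log R
          = s n * (1 - Real.log (s n) + m * Real.log R) := by rw [hsn]; ring
        _ ≤ s n * (-1) := this
        _ = -(s n) := by ring
    exact (funext heq : (fun n => c n * R ^ n) = _) ▸ Real.tendsto_exp_atBot.comp hbot
  -- the test functions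
  set f : ℕ → ℂ → ℂ := fun n z => (c n : ℂ) * z ^ n with hf_def
  have hfdiff : ∀ n, Differentiable ℂ (f n) :=
    fun n => (differentiable_const _).mul (differentiable_pow n)
  have hfabs : ∀ n (z : ℂ), ‖f n z‖ = c n * ‖z‖ ^ n := by
    intro n z
    rw [hf_def]
    simp [norm_mul, norm_pow, Complex.norm_real, Real.norm_eq_abs, abs_of_pos (hcpos n)]
  have hfbound : ∀ n (z : ℂ),
      ‖f n z‖ * Real.exp (-(‖z‖ ^ m)) ≤ 1 := by
    intro n z
    rw [hfabs]
    have := aux_norm m hm n (‖z‖) (norm_nonneg z)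
    rw [hc_def]
    calc Real.exp (s n - s n * Real.log (s n)) * ‖z‖ ^ n
          * Real.exp (-(‖z‖ ^ m))
        = Real.exp ((n:ℝ)/m - (n:ℝ)/m * Real.log ((n:ℝ)/m)) * ‖z‖ ^ n
          * Real.exp (-(‖z‖ ^ m)) := by rw [hs_def]
      _ ≤ 1 := this
  have hfto0 : TendstoLocallyUniformly f 0 Filter.atTop := by
    rw [tendstoLocallyUniformly_iff_forall_isCompact]
    intro K hK
    obtain ⟨R, hRK⟩ := hK.isBounded.subset_closedBall 0
    rw [Metric.tendstoUniformlyOn_iff]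
    intro ε hε
    have h0 := (hdecay (max R 1) (le_max_right R 1)).eventually
      (eventually_lt_nhds hε)
    filter_upwards [h0] with n hn z hz
    rw [dist_comm, Pi.zero_apply, dist_zero_right]
    have hz' : ‖z‖ ≤ max R 1 := by
      have := hRK hz
      rw [Metric.mem_closedBall, Complex.dist_eq, sub_zero] at this
      exact le_trans this (le_max_left R 1)
    calc ‖f n z‖ = c n * ‖z‖ ^ n := hfabs n z
      _ ≤ c n * (max R 1) ^ n := by
          apply mul_le_mul_of_nonneg_left _ (hcpos n).le
          exact pow_le_pow_left₀ (norm_nonneg z) hz' n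
      _ < ε := by simpa [Real.dist_eq] using hn
  obtain ⟨N, hN⟩ := hcpt f hfdiff ⟨1, hfbound⟩ hfto0 (1/2) (by norm_num)
  have hN' : ∀ n, N ≤ n → ∀ z : ℂ,
      c n * ‖Φ z‖ ^ n * Real.exp (-(‖z‖ ^ m)) ≤ 1/2 := by
    intro n hn z
    have := hN n hn z
    rwa [hfabs] at this
  set D : ℝ := ((N:ℝ)+2)/m with hD_def
  have hD0 : 0 < D := by positivity
  have hgrow : ∀ z : ℂ, ‖Φ z‖ ≤ (‖z‖ ^ m + D) ^ (1/m) := by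
    intro z
    set t := ‖z‖ ^ m with ht_def
    have ht0 : 0 ≤ t := Real.rpow_nonneg (norm_nonneg z) m
    set n := N + 1 + ⌈m * t⌉₊ with hn_def
    have hnN : N ≤ n := by omega
    have hn1 : 0 < n := by omega
    have hsn : 0 < s n := by
      rw [hs_def]
      have : (0:ℝ) < (n:ℝ) := by exact_mod_cast hn1
      positivity
    have hts : t ≤ s n := by
      rw [hs_def, le_div_iff₀ hm]
      calc t * m = m * t := by ring
        _ ≤ (⌈m * t⌉₊ : ℝ) := Nat.le_ceil _
        _ ≤ (n : ℝ) := by exact_mod_cast Nat.le_add_left _ _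
    have key := hN' n hnN z
    have hX : c n * ‖Φ z‖ ^ n ≤ Real.exp t := by
      have hpos : (0:ℝ) < Real.exp (-t) := Real.exp_pos _
      have h3 : c n * ‖Φ z‖ ^ n * Real.exp (-t) ≤ 1 := le_trans key (by norm_num)
      have h4 := mul_le_mul_of_nonneg_right h3 (Real.exp_pos t).le
      rw [mul_assoc, ← Real.exp_add, one_mul] at h4
      simpa using h4
    have hPhin : ‖Φ z‖ ^ n ≤ Real.exp (Real.log (s n) / m) ^ n := by
      have hAn : (Real.exp (Real.log (s n) / m)) ^ n
          = Real.exp (s n * Real.log (s n)) := by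
        rw [← Real.exp_nat_mul]
        congr 1
        rw [hs_def]
        field_simp
      rw [hAn]
      have h5 : ‖Φ z‖ ^ n ≤ Real.exp t / c n :=
        (le_div_iff₀ (hcpos n)).2 (by linarith [hX, mul_comm (c n) (‖Φ z‖ ^ n)])
      refine le_trans h5 ?_
      rw [hc_def, ← Real.exp_sub, Real.exp_le_exp]
      linarith
    have h6 : ‖Φ z‖ ≤ Real.exp (Real.log (s n) / m) :=
      le_of_pow_le_pow_left₀ hn1.ne' (Real.exp_nonneg _) hPhin
    refine le_trans h6 ?_
    have hsle : s n ≤ t + D := by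
      rw [hs_def, hD_def, div_le_iff₀ hm]
      have hceil : (⌈m * t⌉₊ : ℝ) < m * t + 1 := Nat.ceil_lt_add_one (by positivity)
      have : (n : ℝ) = (N : ℝ) + 1 + (⌈m * t⌉₊ : ℝ) := by
        rw [hn_def]; push_cast; ring
      rw [this]
      have hexp : (t + ((N:ℝ)+2)/m) * m = t * m + (N:ℝ) + 2 := by field_simp; ring
      rw [hexp]
      nlinarith
    have htD : 0 < t + D := by linarith
    rw [Real.rpow_def_of_pos htD, Real.exp_le_exp, mul_one_div]
    have hlog := Real.log_le_log hsn hsle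
    exact by gcongr
  -- linear bound for large |z|
  set E : ℝ := (2:ℝ) ^ (1/m) with hE_def
  have hlin : ∀ z : ℂ, D ≤ ‖z‖ ^ m →
      ‖Φ z‖ ≤ E * ‖z‖ := by
    intro z hz
    refine le_trans (hgrow z) ?_
    have h1 : ‖z‖ ^ m + D ≤ 2 * ‖z‖ ^ m := by linarith
    have h2 : (0:ℝ) < ‖z‖ ^ m := lt_of_lt_of_le hD0 hz
    calc (‖z‖ ^ m + D) ^ (1/m)
        ≤ (2 * ‖z‖ ^ m) ^ (1/m) := by
          apply Real.rpow_le_rpow (by linarith) h1 (by positivity)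
      _ = E * (‖z‖ ^ m) ^ (1/m) := by
          rw [hE_def, Real.mul_rpow (by norm_num) h2.le]
      _ = E * ‖z‖ := by
          rw [← Real.rpow_mul (norm_nonneg z), mul_one_div,
            div_self hm.ne', Real.rpow_one]
  have hE0 : 0 < E := Real.rpow_pos_of_pos (by norm_num) _
  -- the difference quotient is entire and bounded
  set g := dslope Φ 0 with hg_def
  have hgdiff : Differentiable ℂ g := by
    rw [← differentiableOn_univ]
    exact (Complex.differentiableOn_dslope (Filter.univ_mem)).2 hΦ.differentiableOn
  set R₀ : ℝ := max 1 (D ^ (1/m)) with hR0_def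
  obtain ⟨C₁, hC₁⟩ := (isCompact_closedBall (0:ℂ) R₀).exists_bound_of_continuousOn
    hgdiff.continuous.continuousOn
  set C : ℝ := max C₁ (E + ‖Φ 0‖) with hC_def
  have hgbdd : ∀ z : ℂ, ‖g z‖ ≤ C := by
    intro z
    rcases le_or_gt (‖z‖) R₀ with h | h
    · refine le_trans (hC₁ z ?_) (le_max_left _ _)
      simpa [Metric.mem_closedBall, Complex.dist_eq] using h
    · have h1 : (1:ℝ) < ‖z‖ := lt_of_le_of_lt (le_max_left _ _) h
      have hz0 : z ≠ 0 := by
        intro hz0; rw [hz0] at h1; simp at h1; linarith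
      have hDz : D ≤ ‖z‖ ^ m := by
        have h2 : D ^ (1/m) ≤ ‖z‖ := le_of_lt (lt_of_le_of_lt (le_max_right _ _) h)
        calc D = (D ^ (1/m)) ^ m := by
              rw [← Real.rpow_mul hD0.le, one_div, inv_mul_cancel₀ hm.ne', Real.rpow_one]
          _ ≤ ‖z‖ ^ m := Real.rpow_le_rpow (Real.rpow_nonneg hD0.le _) h2 hm.le
      have hgz : g z = (Φ z - Φ 0) / z := by
        rw [hg_def, dslope_of_ne Φ hz0, slope_def_field]
        rw [sub_zero]
      rw [hgz]
      have : ‖(Φ z - Φ 0) / z‖ = ‖Φ z - Φ 0‖ / ‖z‖ := by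
        simp [norm_div]
      rw [this]
      refine le_trans ?_ (le_max_right C₁ _)
      rw [div_le_iff₀ (by linarith : (0:ℝ) < ‖z‖)]
      have h3 : ‖Φ z - Φ 0‖ ≤ E * ‖z‖ + ‖Φ 0‖ := by
        have h4 := norm_sub_le (Φ z) (Φ 0)
        linarith [hlin z hDz]
      calc ‖Φ z - Φ 0‖ ≤ E * ‖z‖ + ‖Φ 0‖ := h3
        _ ≤ (E + ‖Φ 0‖) * ‖z‖ := by nlinarith [norm_nonneg (Φ 0)]
  have hgbounded : Bornology.IsBounded (Set.range g) := by
    rw [Metric.isBounded_iff_subset_closedBall 0]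
    exact ⟨C, by rintro _ ⟨z, rfl⟩; simpa [Metric.mem_closedBall, dist_zero_right] using hgbdd z⟩
  have hconst : ∀ z : ℂ, g z = g 1 := fun z =>
    hgdiff.apply_eq_apply_of_bounded hgbounded z 1
  set a : ℂ := g 1 with ha_def
  set b : ℂ := Φ 0 with hb_def
  have haff : ∀ z : ℂ, Φ z = a * z + b := by
    intro z
    rcases eq_or_ne z 0 with rfl | hz
    · simp [hb_def]
    · have h := hconst z
      rw [hg_def, dslope_of_ne Φ hz, slope_def_field] at h
      have : (Φ z - Φ 0) / (z - 0) = a := h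
      rw [sub_zero] at this
      field_simp at this
      rw [hb_def]
      linear_combination this
  refine ⟨a, b, ?_, haff⟩
  by_contra hlt
  push_neg at hlt
  have ha0 : a ≠ 0 := by
    intro h0; rw [h0] at hlt; simp at hlt; linarith
  have haa : (0:ℝ) < ‖a‖ := norm_pos_iff.mpr ha0
  set n := N + 1 with hn_def
  have hsn : 0 < s n := by
    rw [hs_def]
    have : (0:ℝ) < (n:ℝ) := by positivity
    positivity
  set r : ℝ := Real.exp (Real.log (s n) / m) with hr_def
  have hr : 0 < r := Real.exp_pos _
  have hrm : r ^ m = s n := by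
    rw [hr_def, ← Real.exp_log hsn]
    rw [Real.rpow_def_of_pos (Real.exp_pos _), Real.log_exp]
    congr 1
    field_simp
    rw [Real.log_exp]
  have hrn : c n * r ^ n = Real.exp (s n) := by
    have : r ^ n = Real.exp (s n * Real.log (s n)) := by
      rw [hr_def, ← Real.exp_nat_mul]
      congr 1
      rw [hs_def]
      field_simp
    rw [this, hc_def, ← Real.exp_add]
    congr 1
    ring
  -- pick a point where |Φ| ≥ r
  set z₀ : ℂ := ((r / ‖a‖ : ℝ) : ℂ) * starRingEnd ℂ a with hz0_def
  have habsz₀ : ‖z₀‖ = r := by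
    rw [hz0_def, norm_mul, Complex.norm_real, Real.norm_eq_abs, Complex.norm_conj,
      abs_of_pos (by positivity : (0:ℝ) < r / ‖a‖)]
    field_simp
  have hdisj : r ≤ ‖a * z₀ + b‖ ∨ r ≤ ‖a * (-z₀) + b‖ := by
    by_contra hcon
    push_neg at hcon
    obtain ⟨h1, h2⟩ := hcon
    have key : (a * z₀ + b) - (a * (-z₀) + b) = 2 * (a * z₀) := by ring
    have h3 : ‖2 * (a * z₀)‖ = 2 * (‖a‖ * r) := by
      rw [norm_mul, norm_mul, habsz₀, Complex.norm_two]
    have h4 : ‖(a * z₀ + b) - (a * (-z₀) + b)‖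
        ≤ ‖a * z₀ + b‖ + ‖a * (-z₀) + b‖ := by
      simpa using norm_sub_le (a * z₀ + b) (a * (-z₀) + b)
    rw [key, h3] at h4
    nlinarith
  obtain ⟨z₁, hz₁abs, hz₁ge⟩ : ∃ z₁ : ℂ, ‖z₁‖ = r ∧ r ≤ ‖Φ z₁‖ := by
    rcases hdisj with h | h
    · exact ⟨z₀, habsz₀, by rw [haff z₀]; exact h⟩
    · exact ⟨-z₀, by rw [norm_neg, habsz₀], by rw [haff (-z₀)]; exact h⟩
  have final := hN' n (by omega) z₁
  rw [hz₁abs, hrm] at final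
  have hmono : c n * r ^ n ≤ c n * ‖Φ z₁‖ ^ n :=
    mul_le_mul_of_nonneg_left (pow_le_pow_left₀ hr.le hz₁ge n) (hcpos n).le
  have hfin : Real.exp (s n) * Real.exp (-(s n)) ≤ 1/2 := by
    rw [← hrn]
    calc c n * r ^ n * Real.exp (-(s n))
        ≤ c n * ‖Φ z₁‖ ^ n * Real.exp (-(s n)) := by
          apply mul_le_mul_of_nonneg_right hmono (Real.exp_nonneg _)
      _ ≤ 1/2 := final
  rw [← Real.exp_add] at hfin
  simp at hfin
  linarith [hfin]
end

section
/- Let 0 < p < ∞ and m > 0 with m < 1 - 2/p (in particular p > 2). Suppose (f_n) is a sequence of entire functions with sup_n sup_{z} |f_n(z)| e^{-|z|^m} ≤ C < ∞, sup_z |f_n'(z)| e^{-|z|^m} (1+|z|)^{-(m-1)} ≤ C, and f_n → 0 uniformly on compact subsets of ℂ. Then ∫_ℂ |f_n'(z)|^p e^{-p|z|^m} dA(z) → 0 as n → ∞. -/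
open MeasureTheory ENNReal Filter

theorem compact_differential_growth_to_fock (m p : ℝ) (hp : 0 < p) (hm : 0 < m)
    (hmp : m < 1 - 2 / p) (C : ℝ) (f : ℕ → ℂ → ℂ)
    (hf : ∀ n, Differentiable ℂ (f n))
    (hbd : ∀ n (z : ℂ), ‖f n z‖ * Real.exp (-(‖z‖ ^ m)) ≤ C)
    (hbd' : ∀ n (z : ℂ), ‖deriv (f n) z‖ * Real.exp (-(‖z‖ ^ m)) *
      (1 + ‖z‖) ^ (-(m - 1)) ≤ C)
    (hconv : TendstoLocallyUniformly f 0 atTop) :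
    Tendsto (fun n => ∫⁻ z : ℂ,
        ENNReal.ofReal (‖deriv (f n) z‖ ^ p *
          Real.exp (-(p * ‖z‖ ^ m))))
      atTop (nhds 0) := by
  have hC : 0 ≤ C := le_trans (by positivity) (hbd' 0 0)
  set r : ℝ := p * (1 - m) with hr
  have hr2 : (2 : ℝ) < r := by
    have h1 : 2 / p < 1 - m := by linarith
    have := (div_lt_iff₀ hp).mp h1
    nlinarith
  -- the dominating function
  have hint : Integrable (fun z : ℂ => C ^ p * (1 + ‖z‖) ^ (-r)) (volume : Measure ℂ) := by
    refine Integrable.const_mul ?_ _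
    exact integrable_one_add_norm (by simpa [Complex.finrank_real_complex] using hr2)
  set g : ℂ → ℝ≥0∞ := fun z => ENNReal.ofReal (C ^ p * (1 + ‖z‖) ^ (-r)) with hg
  have hgfin : ∫⁻ z, g z ≠ ∞ := hint.lintegral_lt_top.ne
  -- pointwise bound
  have hbound : ∀ n (z : ℂ),
      ‖deriv (f n) z‖ ^ p * Real.exp (-(p * ‖z‖ ^ m))
        ≤ C ^ p * (1 + ‖z‖) ^ (-r) := by
    intro n z
    set A := ‖deriv (f n) z‖ with hA
    set E := Real.exp (-(‖z‖ ^ m)) with hE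
    set B := 1 + ‖z‖ with hB
    have hBpos : 0 < B := by positivity
    have hAE : A * E ≤ C * B ^ (m - 1) := by
      have h := hbd' n z
      have hBne : B ^ (-(m - 1)) > 0 := Real.rpow_pos_of_pos hBpos _
      have := mul_le_mul_of_nonneg_right h (le_of_lt (Real.rpow_pos_of_pos hBpos (m - 1)))
      calc A * E = A * E * (B ^ (-(m - 1)) * B ^ (m - 1)) := by
            rw [← Real.rpow_add hBpos]; simp
        _ = A * E * B ^ (-(m - 1)) * B ^ (m - 1) := by ring
        _ ≤ C * B ^ (m - 1) := this
    have hAEnn : 0 ≤ A * E := by positivity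
    have h2 : (A * E) ^ p ≤ (C * B ^ (m - 1)) ^ p :=
      Real.rpow_le_rpow hAEnn hAE hp.le
    have h3 : (A * E) ^ p = A ^ p * Real.exp (-(p * ‖z‖ ^ m)) := by
      rw [Real.mul_rpow (by positivity) (by positivity)]
      congr 1
      rw [hE, ← Real.exp_mul]
      ring_nf
    have h4 : (C * B ^ (m - 1)) ^ p = C ^ p * B ^ ((m - 1) * p) := by
      rw [Real.mul_rpow hC (by positivity), ← Real.rpow_mul hBpos.le]
    have h5 : (m - 1) * p = -r := by rw [hr]; ring
    rw [h3, h4, h5] at h2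
    simpa [hB] using h2
  -- measurability
  have hmeas : ∀ n, Measurable (fun z : ℂ =>
      ENNReal.ofReal (‖deriv (f n) z‖ ^ p *
        Real.exp (-(p * ‖z‖ ^ m)))) := by
    intro n
    have hrpow : Continuous fun x : ℝ => x ^ p := by
      refine continuous_iff_continuousAt.mpr fun x => Real.continuousAt_rpow_const x p ?_
      exact Or.inr hp.le
    have hd : Continuous (deriv (f n)) :=
      ((hf n).contDiff (n := 1)).continuous_deriv le_rfl
    have hrm : Continuous fun x : ℝ => x ^ m := by
      refine continuous_iff_continuousAt.mpr fun x => Real.continuousAt_rpow_const x m ?_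
      exact Or.inr hm.le
    refine (ENNReal.continuous_ofReal.comp (Continuous.mul ?_ ?_)).measurable
    · exact hrpow.comp (continuous_norm.comp hd)
    · exact Real.continuous_exp.comp
        ((continuous_const.mul (hrm.comp continuous_norm)).neg)
  -- pointwise convergence of derivatives
  have hderiv : TendstoLocallyUniformlyOn (fun n => deriv (f n)) (deriv (0 : ℂ → ℂ))
      atTop Set.univ := by
    rw [← tendstoLocallyUniformlyOn_univ] at hconv
    have := hconv.deriv (Eventually.of_forall fun n => (hf n).differentiableOn)
      isOpen_univ
    simpa [Function.comp_def] using this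
  have hpt : ∀ z : ℂ, Tendsto (fun n => ‖deriv (f n) z‖) atTop (nhds 0) := by
    intro z
    have h := hderiv.tendsto_at (Set.mem_univ z)
    have : deriv (0 : ℂ → ℂ) z = 0 := by
      rw [show (0 : ℂ → ℂ) = fun _ => (0 : ℂ) from rfl, deriv_const]
    rw [this] at h
    simpa [Function.comp_def] using (continuous_norm.tendsto 0).comp h
  -- dominated convergence
  have key := tendsto_lintegral_of_dominated_convergence (μ := volume)
    (F := fun n z => ENNReal.ofReal (‖deriv (f n) z‖ ^ p *
      Real.exp (-(p * ‖z‖ ^ m)))) (f := fun _ : ℂ => (0 : ℝ≥0∞)) g hmeas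
    (fun n => Eventually.of_forall fun z => ENNReal.ofReal_le_ofReal (hbound n z))
    hgfin ?_
  · simpa using key
  · refine Eventually.of_forall fun z => ?_
    have h1 : Tendsto (fun n => ‖deriv (f n) z‖ ^ p) atTop (nhds 0) := by
      have := (hpt z).rpow_const (Or.inr hp.le)
      simpa [Real.zero_rpow hp.ne'] using this
    have h2 : Tendsto (fun n => ‖deriv (f n) z‖ ^ p *
        Real.exp (-(p * ‖z‖ ^ m))) atTop (nhds 0) := by
      simpa using h1.mul_const (Real.exp (-(p * ‖z‖ ^ m)))
    simpa [Pi.zero_apply, Function.comp_def] using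
      (ENNReal.continuous_ofReal.tendsto 0).comp h2
end

section
/- Let m > 0 and let f be an entire function with sup_{z ∈ ℂ} |f'(z)| e^{-|z|^m} (1+|z|)^{1-m} =: M < ∞. Then f belongs to F_{(m,∞)}, i.e. sup_{z ∈ ℂ} |f(z)| e^{-|z|^m} < ∞; more precisely there is a constant C depending only on m such that sup_z |f(z)| e^{-|z|^m} ≤ C(|f(0)| + M). -/
open Real intervalIntegral Set MeasureTheory

lemma exp_rpow_continuous {m : ℝ} (hm : 0 < m) :
    Continuous (fun s : ℝ => Real.exp (s ^ m)) := by
  apply Real.continuous_exp.comp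
  apply continuous_iff_continuousAt.mpr
  intro x
  exact Real.continuousAt_rpow_const x m (Or.inr hm.le)

lemma shift_rpow_continuousOn {p r : ℝ} (hr : 0 ≤ r) :
    ContinuousOn (fun s : ℝ => (1 + s) ^ p) (uIcc (0:ℝ) r) := by
  intro s hs
  rw [uIcc_of_le hr] at hs
  have h1 : (1:ℝ) + s ≠ 0 := by nlinarith [hs.1]
  exact ((Real.continuousAt_rpow_const (1 + s) p (Or.inl h1)).comp
    ((continuous_const.add continuous_id).continuousAt)).continuousWithinAt

lemma g_integrable {m r : ℝ} (hm : 0 < m) (hr : 0 ≤ r) :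
    IntervalIntegrable (fun s : ℝ => Real.exp (s ^ m) * (1 + s) ^ (m - 1))
      MeasureTheory.volume 0 r :=
  (((exp_rpow_continuous hm).continuousOn).mul (shift_rpow_continuousOn hr)).intervalIntegrable

lemma integral_bound (m : ℝ) (hm : 0 < m) :
    ∃ A > (0:ℝ), ∀ r : ℝ, 0 ≤ r →
      (∫ s in (0:ℝ)..r, Real.exp (s ^ m) * (1 + s) ^ (m - 1)) ≤ A * Real.exp (r ^ m) := by
  rcases le_total m 1 with hm1 | hm1
  · -- case m ≤ 1
    refine ⟨Real.exp 1 / m, by positivity, fun r hr => ?_⟩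
    -- FTC for F s = exp ((1+s)^m - 1)
    have hD : ∀ s : ℝ, 0 ≤ s → HasDerivAt (fun t : ℝ => Real.exp ((1 + t) ^ m - 1))
        (Real.exp ((1 + s) ^ m - 1) * (m * (1 + s) ^ (m - 1))) s := by
      intro s hs
      have h1 : HasDerivAt (fun t : ℝ => 1 + t) 1 s := (hasDerivAt_id s).const_add 1
      have h2 : HasDerivAt (fun y : ℝ => y ^ m) (m * (1 + s) ^ (m - 1)) (1 + s) :=
        Real.hasDerivAt_rpow_const (Or.inl (by nlinarith))
      have h4 := ((h2.comp s h1).sub_const 1).exp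
      simpa [Function.comp] using h4
    have hFint : IntervalIntegrable
        (fun s : ℝ => Real.exp ((1 + s) ^ m - 1) * (m * (1 + s) ^ (m - 1)))
        MeasureTheory.volume 0 r := by
      apply ContinuousOn.intervalIntegrable
      have hc1 : ContinuousOn (fun s : ℝ => Real.exp ((1 + s) ^ m - 1)) (uIcc (0:ℝ) r) := by
        apply Real.continuous_exp.comp_continuousOn
        exact (shift_rpow_continuousOn hr (p := m)).sub continuousOn_const
      exact hc1.mul (continuousOn_const.mul (shift_rpow_continuousOn hr))
    have hFTC : (∫ s in (0:ℝ)..r,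
        Real.exp ((1 + s) ^ m - 1) * (m * (1 + s) ^ (m - 1)))
        = Real.exp ((1 + r) ^ m - 1) - 1 := by
      have := intervalIntegral.integral_eq_sub_of_hasDerivAt
        (f := fun t : ℝ => Real.exp ((1 + t) ^ m - 1))
        (f' := fun s : ℝ => Real.exp ((1 + s) ^ m - 1) * (m * (1 + s) ^ (m - 1)))
        (a := 0) (b := r)
        (fun s hs => hD s (by rw [uIcc_of_le hr] at hs; exact hs.1)) hFint
      rw [this]
      norm_num [Real.one_rpow]
    have hmono : (∫ s in (0:ℝ)..r, Real.exp (s ^ m) * (1 + s) ^ (m - 1))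
        ≤ ∫ s in (0:ℝ)..r, (Real.exp 1 / m) *
            (Real.exp ((1 + s) ^ m - 1) * (m * (1 + s) ^ (m - 1))) := by
      apply intervalIntegral.integral_mono_on hr (g_integrable hm hr)
        (hFint.const_mul _)
      intro s hs
      have hs0 : 0 ≤ s := hs.1
      have h1 : s ^ m ≤ (1 + s) ^ m := Real.rpow_le_rpow hs0 (by linarith) hm.le
      have h2 : Real.exp (s ^ m) ≤ Real.exp 1 * Real.exp ((1 + s) ^ m - 1) := by
        rw [← Real.exp_add]
        apply Real.exp_le_exp.mpr
        linarith
      have h3 : (0:ℝ) ≤ (1 + s) ^ (m - 1) := Real.rpow_nonneg (by linarith) _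
      calc Real.exp (s ^ m) * (1 + s) ^ (m - 1)
          ≤ (Real.exp 1 * Real.exp ((1 + s) ^ m - 1)) * (1 + s) ^ (m - 1) :=
            mul_le_mul_of_nonneg_right h2 h3
        _ = (Real.exp 1 / m) * (Real.exp ((1 + s) ^ m - 1) * (m * (1 + s) ^ (m - 1))) := by
            field_simp
    have hsub : ((1:ℝ) + r) ^ m ≤ 1 + r ^ m := by
      have h := NNReal.rpow_add_le_add_rpow (1 : NNReal) r.toNNReal hm.le hm1
      have h2 := NNReal.coe_le_coe.mpr h
      push_cast [NNReal.coe_rpow, Real.coe_toNNReal r hr] at h2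
      simpa [Real.one_rpow] using h2
    calc (∫ s in (0:ℝ)..r, Real.exp (s ^ m) * (1 + s) ^ (m - 1))
        ≤ ∫ s in (0:ℝ)..r, (Real.exp 1 / m) *
            (Real.exp ((1 + s) ^ m - 1) * (m * (1 + s) ^ (m - 1))) := hmono
      _ = (Real.exp 1 / m) * (Real.exp ((1 + r) ^ m - 1) - 1) := by
            rw [intervalIntegral.integral_const_mul, hFTC]
      _ ≤ (Real.exp 1 / m) * Real.exp (r ^ m) := by
            apply mul_le_mul_of_nonneg_left _ (by positivity)
            have : Real.exp ((1 + r) ^ m - 1) ≤ Real.exp (r ^ m) := by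
              apply Real.exp_le_exp.mpr; linarith
            linarith [this]
  · -- case 1 ≤ m
    refine ⟨(2:ℝ) ^ (m - 1) / m + Real.exp 1 * (2:ℝ) ^ (m - 1), by positivity, fun r hr => ?_⟩
    set a : ℝ := (2:ℝ) ^ (m - 1) / m with ha
    set b : ℝ := Real.exp 1 * (2:ℝ) ^ (m - 1) with hb
    have ha0 : 0 < a := by positivity
    have hb0 : 0 < b := by positivity
    have h2pos : (0:ℝ) < (2:ℝ) ^ (m - 1) := Real.rpow_pos_of_pos (by norm_num) _
    -- FTC for G s = exp (s^m)
    have hD : ∀ s : ℝ, HasDerivAt (fun t : ℝ => Real.exp (t ^ m))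
        (Real.exp (s ^ m) * (m * s ^ (m - 1))) s := by
      intro s
      exact (Real.hasDerivAt_rpow_const (Or.inr hm1)).exp
    have hG'cont : Continuous (fun s : ℝ => Real.exp (s ^ m) * (m * s ^ (m - 1))) := by
      apply (exp_rpow_continuous hm).mul
      apply continuous_const.mul
      apply continuous_iff_continuousAt.mpr
      intro x
      exact Real.continuousAt_rpow_const x (m - 1) (Or.inr (by linarith))
    have hFTC : (∫ s in (0:ℝ)..r, Real.exp (s ^ m) * (m * s ^ (m - 1)))
        = Real.exp (r ^ m) - 1 := by
      have := intervalIntegral.integral_eq_sub_of_hasDerivAt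
        (f := fun t : ℝ => Real.exp (t ^ m))
        (f' := fun s : ℝ => Real.exp (s ^ m) * (m * s ^ (m - 1)))
        (a := 0) (b := r) (fun s _ => hD s) (hG'cont.intervalIntegrable 0 r)
      simpa [Real.zero_rpow hm.ne', Real.exp_zero] using this
    have hmono : (∫ s in (0:ℝ)..r, Real.exp (s ^ m) * (1 + s) ^ (m - 1))
        ≤ ∫ s in (0:ℝ)..r, (a * (Real.exp (s ^ m) * (m * s ^ (m - 1))) + b) := by
      apply intervalIntegral.integral_mono_on hr (g_integrable hm hr)
        (((hG'cont.intervalIntegrable 0 r).const_mul a).add intervalIntegrable_const)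
      intro s hs
      have hs0 : 0 ≤ s := hs.1
      have hterm1 : (0:ℝ) ≤ a * (Real.exp (s ^ m) * (m * s ^ (m - 1))) := by
        have := Real.rpow_nonneg hs0 (m - 1)
        positivity
      rcases le_total s 1 with hs1 | hs1
      · have h1 : Real.exp (s ^ m) ≤ Real.exp 1 :=
          Real.exp_le_exp.mpr (Real.rpow_le_one hs0 hs1 hm.le)
        have h2 : (1 + s) ^ (m - 1) ≤ (2:ℝ) ^ (m - 1) :=
          Real.rpow_le_rpow (by linarith) (by linarith) (by linarith)
        have h3 : Real.exp (s ^ m) * (1 + s) ^ (m - 1) ≤ b := by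
          rw [hb]
          apply mul_le_mul h1 h2 (Real.rpow_nonneg (by linarith) _) (Real.exp_pos _).le
        linarith
      · have h2 : (1 + s) ^ (m - 1) ≤ (2:ℝ) ^ (m - 1) * s ^ (m - 1) := by
          have h4 : (1 + s) ^ (m - 1) ≤ (2 * s) ^ (m - 1) :=
            Real.rpow_le_rpow (by linarith) (by linarith) (by linarith)
          rwa [Real.mul_rpow (by norm_num) (by linarith)] at h4
        have h5 : Real.exp (s ^ m) * (1 + s) ^ (m - 1)
            ≤ a * (Real.exp (s ^ m) * (m * s ^ (m - 1))) := by
          calc Real.exp (s ^ m) * (1 + s) ^ (m - 1)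
              ≤ Real.exp (s ^ m) * ((2:ℝ) ^ (m - 1) * s ^ (m - 1)) :=
                mul_le_mul_of_nonneg_left h2 (Real.exp_pos _).le
            _ = a * (Real.exp (s ^ m) * (m * s ^ (m - 1))) := by
                rw [ha]; field_simp
        linarith [hb0.le]
    have hr_le : r ≤ Real.exp (r ^ m) := by
      rcases le_total r 1 with hr1 | hr1
      · have : (1:ℝ) ≤ Real.exp (r ^ m) :=
          Real.one_le_exp (Real.rpow_nonneg hr _)
        linarith
      · have h1 : r ≤ r ^ m := by
          have := Real.rpow_le_rpow_of_exponent_le hr1 hm1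
          rwa [Real.rpow_one] at this
        have h2 : r ^ m + 1 ≤ Real.exp (r ^ m) := Real.add_one_le_exp _
        linarith
    calc (∫ s in (0:ℝ)..r, Real.exp (s ^ m) * (1 + s) ^ (m - 1))
        ≤ ∫ s in (0:ℝ)..r, (a * (Real.exp (s ^ m) * (m * s ^ (m - 1))) + b) := hmono
      _ = a * (Real.exp (r ^ m) - 1) + b * r := by
          rw [intervalIntegral.integral_add (((hG'cont.intervalIntegrable 0 r)).const_mul a)
            intervalIntegrable_const, intervalIntegral.integral_const_mul, hFTC,
            intervalIntegral.integral_const]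
          simp [smul_eq_mul]; ring
      _ ≤ (a + b) * Real.exp (r ^ m) := by
          have hbr : b * r ≤ b * Real.exp (r ^ m) :=
            mul_le_mul_of_nonneg_left hr_le hb0.le
          nlinarith [ha0]

theorem growth_space_of_deriv_bound (m : ℝ) (hm : 0 < m) :
    ∃ C > (0 : ℝ), ∀ f : ℂ → ℂ, Differentiable ℂ f → ∀ M : ℝ,
      (∀ z : ℂ, ‖deriv f z‖ * Real.exp (-(‖z‖ ^ m)) *
        (1 + ‖z‖) ^ (1 - m) ≤ M) →
      ∀ z : ℂ, ‖f z‖ * Real.exp (-(‖z‖ ^ m)) ≤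
        C * (‖f 0‖ + M) := by
  obtain ⟨A, hA, hint⟩ := integral_bound m hm
  refine ⟨1 + A, by positivity, fun f hf M hM z => ?_⟩
  have hM0 : 0 ≤ M := le_trans (by positivity) (hM 0)
  have hbound : ∀ w : ℂ, ‖deriv f w‖ ≤
      M * Real.exp (‖w‖ ^ m) * (1 + ‖w‖) ^ (m - 1) := by
    intro w
    have h := hM w
    set X := ‖deriv f w‖
    set x := ‖w‖
    have hx0 : 0 ≤ x := norm_nonneg w
    have key : Real.exp (-(x ^ m)) * Real.exp (x ^ m) = 1 := by
      rw [← Real.exp_add]; simp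
    have key2 : (1 + x) ^ (1 - m) * (1 + x) ^ (m - 1) = 1 := by
      rw [← Real.rpow_add (by linarith)]; norm_num
    calc X = X * ((Real.exp (-(x ^ m)) * Real.exp (x ^ m)) *
            ((1 + x) ^ (1 - m) * (1 + x) ^ (m - 1))) := by rw [key, key2]; ring
      _ = (X * Real.exp (-(x ^ m)) * (1 + x) ^ (1 - m)) *
            (Real.exp (x ^ m) * (1 + x) ^ (m - 1)) := by ring
      _ ≤ M * (Real.exp (x ^ m) * (1 + x) ^ (m - 1)) := by
            apply mul_le_mul_of_nonneg_right h
            have : (0:ℝ) ≤ (1 + x) ^ (m - 1) := Real.rpow_nonneg (by linarith) _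
            positivity
      _ = M * Real.exp (x ^ m) * (1 + x) ^ (m - 1) := by ring
  by_cases hz : z = 0
  · subst hz
    simp only [norm_zero, Real.zero_rpow hm.ne', neg_zero, Real.exp_zero, mul_one]
    nlinarith [norm_nonneg (f 0), hA, hM0]
  · set r := ‖z‖ with hrdef
    have hr : 0 < r := norm_pos_iff.mpr hz
    set u : ℂ := z / (r : ℂ) with hu
    have hrc : (r : ℂ) ≠ 0 := by
      simpa using hr.ne'
    have huabs : ‖u‖ = 1 := by
      rw [hu, norm_div, Complex.norm_real, Real.norm_eq_abs, abs_of_pos hr]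
      exact div_self hr.ne'
    have huz : (r : ℂ) * u = z := by
      rw [hu]; field_simp
    have hφd : ∀ t : ℝ, HasDerivAt (fun t : ℝ => f ((t : ℂ) * u))
        (deriv f ((t : ℂ) * u) * u) t := by
      intro t
      have h1 : ∀ w : ℂ, HasDerivAt (fun w : ℂ => f (w * u)) (deriv f (w * u) * u) w := by
        intro w
        have h2 : HasDerivAt (fun w : ℂ => w * u) u w := by
          simpa using (hasDerivAt_id w).mul_const u
        have h3 := (hf.differentiableAt (x := w * u)).hasDerivAt
        exact h3.comp w h2
      exact (h1 (t : ℂ)).comp_ofReal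
    have hdcont : Continuous (deriv f) := by
      have : ContDiff ℂ 1 f := hf.contDiff
      exact this.continuous_deriv le_rfl
    have hφ'cont : Continuous (fun t : ℝ => deriv f ((t : ℂ) * u) * u) :=
      (hdcont.comp (Complex.continuous_ofReal.mul continuous_const)).mul continuous_const
    have hFTC : (∫ t in (0:ℝ)..r, deriv f ((t : ℂ) * u) * u) = f z - f 0 := by
      have := intervalIntegral.integral_eq_sub_of_hasDerivAt
        (f := fun t : ℝ => f ((t : ℂ) * u))
        (f' := fun t : ℝ => deriv f ((t : ℂ) * u) * u)
        (a := 0) (b := r) (fun t _ => hφd t) (hφ'cont.intervalIntegrable 0 r)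
      simpa [huz] using this
    have h3 : ‖f z - f 0‖ ≤
        ∫ t in (0:ℝ)..r, M * (Real.exp (t ^ m) * (1 + t) ^ (m - 1)) := by
      rw [← hFTC]
      refine le_trans (intervalIntegral.norm_integral_le_integral_norm hr.le) ?_
      apply intervalIntegral.integral_mono_on hr.le
        (hφ'cont.norm.intervalIntegrable 0 r) ((g_integrable hm hr.le).const_mul M)
      intro t ht
      have h4 : ‖(t : ℂ) * u‖ = t := by
        rw [norm_mul, huabs, Complex.norm_real, Real.norm_eq_abs, abs_of_nonneg ht.1, mul_one]
      have h5 := hbound ((t : ℂ) * u)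
      rw [h4] at h5
      calc ‖deriv f ((t : ℂ) * u) * u‖
          = ‖deriv f ((t : ℂ) * u)‖ := by
            rw [norm_mul, huabs, mul_one]
        _ ≤ M * Real.exp (t ^ m) * (1 + t) ^ (m - 1) := h5
        _ = M * (Real.exp (t ^ m) * (1 + t) ^ (m - 1)) := by ring
    have h6 : ‖f z‖ ≤ ‖f 0‖ + M * (A * Real.exp (r ^ m)) := by
      have htri : ‖f z‖ ≤ ‖f 0‖ + ‖f z - f 0‖ := by
        calc ‖f z‖ = ‖f 0 + (f z - f 0)‖ := by ring_nf
          _ ≤ ‖f 0‖ + ‖f z - f 0‖ := norm_add_le _ _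
      have h7 : (∫ t in (0:ℝ)..r, M * (Real.exp (t ^ m) * (1 + t) ^ (m - 1)))
          ≤ M * (A * Real.exp (r ^ m)) := by
        rw [intervalIntegral.integral_const_mul]
        exact mul_le_mul_of_nonneg_left (hint r hr.le) hM0
      linarith
    have hE0 : 0 < Real.exp (-(r ^ m)) := Real.exp_pos _
    have hE1 : Real.exp (-(r ^ m)) ≤ 1 := by
      rw [Real.exp_le_one_iff]
      simp [Real.rpow_nonneg hr.le]
    have hprod : Real.exp (r ^ m) * Real.exp (-(r ^ m)) = 1 := by
      rw [← Real.exp_add]; simp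
    have h8 : ‖f z‖ * Real.exp (-(r ^ m)) ≤
        (‖f 0‖ + M * (A * Real.exp (r ^ m))) * Real.exp (-(r ^ m)) :=
      mul_le_mul_of_nonneg_right h6 hE0.le
    have h9 : (‖f 0‖ + M * (A * Real.exp (r ^ m))) * Real.exp (-(r ^ m))
        = ‖f 0‖ * Real.exp (-(r ^ m)) + M * A := by
      have : M * (A * Real.exp (r ^ m)) * Real.exp (-(r ^ m))
          = M * A * (Real.exp (r ^ m) * Real.exp (-(r ^ m))) := by ring
      rw [add_mul, this, hprod, mul_one]
    nlinarith [norm_nonneg (f 0), norm_nonneg (f z), hA, hM0, h8, h9]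
end

section
/- Let m = 1. Then the differential operator D f = f' is bounded on F_{(1,∞)}: there exists a constant C such that for every entire function f with sup_z |f(z)| e^{-|z|} < ∞, one has sup_z |f'(z)| e^{-|z|} ≤ C sup_z |f(z)| e^{-|z|}. -/
theorem differential_bounded_on_growth_m_one :
    ∃ C : ℝ, ∀ f : ℂ → ℂ, Differentiable ℂ f → ∀ M : ℝ,
      (∀ z : ℂ, ‖f z‖ * Real.exp (-‖z‖) ≤ M) →
      ∀ z : ℂ, ‖deriv f z‖ * Real.exp (-‖z‖) ≤ C * M := by
  refine ⟨Real.exp 1, fun f hf M hM z => ?_⟩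
  have key : ‖deriv f z‖ ≤ (M * Real.exp (‖z‖ + 1)) / 1 := by
    apply Complex.norm_deriv_le_of_forall_mem_sphere_norm_le one_pos
      hf.diffContOnCl
    intro w hw
    have h1 : ‖w‖ ≤ ‖z‖ + 1 := by
      have hd : dist w z = 1 := Metric.mem_sphere.mp hw
      rw [dist_eq_norm] at hd
      have := norm_sub_norm_le w z
      rw [hd] at this
      linarith
    have h2 := hM w
    have h3 : ‖f w‖ ≤ M * Real.exp (‖w‖) := by
      have := mul_le_mul_of_nonneg_right h2 (Real.exp_pos (‖w‖)).le
      rwa [mul_assoc, ← Real.exp_add, neg_add_cancel, Real.exp_zero, mul_one] at this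
    calc ‖f w‖ ≤ M * Real.exp (‖w‖) := h3
      _ ≤ M * Real.exp (‖z‖ + 1) := by
        apply mul_le_mul_of_nonneg_left (Real.exp_le_exp.mpr h1)
        have := (hM 0).trans' (by positivity)
        linarith [mul_nonneg (norm_nonneg (f 0)) (Real.exp_pos (-(‖(0:ℂ)‖))).le]
  rw [div_one] at key
  have hexp : (0:ℝ) < Real.exp (-‖z‖) := Real.exp_pos _
  calc ‖deriv f z‖ * Real.exp (-‖z‖)
      ≤ M * Real.exp (‖z‖ + 1) * Real.exp (-‖z‖) :=
        mul_le_mul_of_nonneg_right key hexp.le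
    _ = Real.exp 1 * M := by rw [mul_assoc, ← Real.exp_add]; ring_nf
end
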